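/- Let X be a separable real Banach space, let f : X → ℝ be quasiconvex and densely continuous, and let m ∈ ℝ be the topological essential infimum of f. Then the set of points of X \ F'_m at which f is not continuous is contained in an Aronszajn null set, where F'_m = {x ∈ X : f(x) ≤ m}. -/

import Mathlib

open Filter Topology Set MeasureTheory

/-- `f` is quasiconvex: `f (l•x + (1-l)•y) ≤ max (f x) (f y)` for `l ∈ [0,1]`. -/
def QuasiconvexFun {X : Type*} [AddCommGroup X] [Module ℝ X] (f : X → ℝ) : Prop :=
  ∀ x y : X, ∀ l : ℝ, l ∈ Set.Icc (0 : ℝ) 1 →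
    f (l • x + (1 - l) • y) ≤ max (f x) (f y)

/-- `f` is strictly quasiconvex. -/
def StrictlyQuasiconvexFun {X : Type*} [AddCommGroup X] [Module ℝ X] (f : X → ℝ) : Prop :=
  ∀ x y : X, x ≠ y → ∀ l : ℝ, l ∈ Set.Ioo (0 : ℝ) 1 →
    f (l • x + (1 - l) • y) < max (f x) (f y)

/-- `f` is densely continuous: its set of points of continuity is dense. -/
def DenselyContinuous {X : Type*} [TopologicalSpace X] (f : X → ℝ) : Prop :=
  Dense {x : X | ContinuousAt f x}

/-- `m` is the topological essential infimum of `f`: the strict sublevel set `{f < α}`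
is meager for `α < m` and nonmeager for `α > m`. -/
def IsTopEssInf {X : Type*} [TopologicalSpace X] (f : X → ℝ) (m : ℝ) : Prop :=
  (∀ α : ℝ, α < m → IsMeagre {x : X | f x < α}) ∧
  (∀ α : ℝ, m < α → ¬ IsMeagre {x : X | f x < α})

/-- Aronszajn null set: a Borel set `N` such that for every sequence `ξ` with dense linear
span, `N` decomposes as a countable union of Borel sets, the `n`-th of which has Lebesgue
null intersection with every line of direction `ξ n`. -/
def AronszajnNull {X : Type*} [NormedAddCommGroup X] [NormedSpace ℝ X]
    [MeasurableSpace X] (N : Set X) : Prop :=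
  MeasurableSet N ∧
  ∀ ξ : ℕ → X, Dense (Submodule.span ℝ (Set.range ξ) : Set X) →
    ∃ Nn : ℕ → Set X, N = ⋃ n, Nn n ∧
      ∀ n, MeasurableSet (Nn n) ∧
        ∀ x : X, MeasureTheory.volume {t : ℝ | x + t • ξ n ∈ Nn n} = 0

/-- Haar null set: `E` is contained in a Borel set `B` for which there is a Borel
probability measure vanishing on all translates of `B`. -/
def HaarNull {X : Type*} [AddCommGroup X] [TopologicalSpace X]
    [MeasurableSpace X] (E : Set X) : Prop :=
  ∃ B : Set X, E ⊆ B ∧ MeasurableSet B ∧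
    ∃ μ : MeasureTheory.Measure X, MeasureTheory.IsProbabilityMeasure μ ∧
      ∀ x : X, μ ((fun y => x + y) '' B) = 0

/-- Hadamard differentiability of `f` at `x`. -/
def HadamardDiffAt {X : Type*} [NormedAddCommGroup X] [NormedSpace ℝ X]
    (f : X → ℝ) (x : X) : Prop :=
  ∃ L : X →L[ℝ] ℝ, ∀ h : X, ∀ t : ℕ → ℝ, (∀ n, t n ≠ 0) →
    Tendsto t atTop (𝓝 0) → ∀ hs : ℕ → X, Tendsto hs atTop (𝓝 h) →
      Tendsto (fun n => (f (x + t n • hs n) - f x) / t n) atTop (𝓝 (L h))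

/-- Hadamard differentiability at `x` of a function whose relevant values are those on `V`. -/
def HadamardDiffWithinAt {X : Type*} [NormedAddCommGroup X] [NormedSpace ℝ X]
    (f : X → ℝ) (V : Set X) (x : X) : Prop :=
  ∃ L : X →L[ℝ] ℝ, ∀ h : X, ∀ t : ℕ → ℝ, (∀ n, t n ≠ 0) →
    Tendsto t atTop (𝓝 0) → ∀ hs : ℕ → X, Tendsto hs atTop (𝓝 h) →
      (∀ n, x + t n • hs n ∈ V) →
      Tendsto (fun n => (f (x + t n • hs n) - f x) / t n) atTop (𝓝 (L h))

/-- Gâteaux differentiability of `f` at `x` with derivative `L`. -/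
def GateauxDiffAt {X : Type*} [NormedAddCommGroup X] [NormedSpace ℝ X]
    (f : X → ℝ) (x : X) (L : X →L[ℝ] ℝ) : Prop :=
  ∀ h : X, Tendsto (fun t : ℝ => (f (x + t • h) - f x) / t) (𝓝[≠] 0) (𝓝 (L h))

/-- Essential Gâteaux differentiability of `f` at `x`: directional derivatives exist and
are given by a continuous linear functional for a comeager (residual) set of directions
in the unit sphere. -/
def EssGateauxDiffAt {X : Type*} [NormedAddCommGroup X] [NormedSpace ℝ X]
    (f : X → ℝ) (x : X) : Prop :=
  ∃ L : X →L[ℝ] ℝ, ∃ Ω : Set (Metric.sphere (0 : X) 1), IsMeagre Ωᶜ ∧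
    ∀ h ∈ Ω, Tendsto (fun t : ℝ => (f (x + t • (h : X)) - f x) / t) (𝓝[≠] 0) (𝓝 (L (h : X)))

/-- `K` is a closed convex cone. -/
def IsClosedConvexCone {X : Type*} [NormedAddCommGroup X] [NormedSpace ℝ X] (K : Set X) : Prop :=
  IsClosed K ∧ Convex ℝ K ∧ ∀ l : ℝ, 0 ≤ l → ∀ k ∈ K, l • k ∈ K

/-- `f` is `K`-nondecreasing on `U`. -/
def KNondecreasingOn {X : Type*} [AddCommGroup X] [Module ℝ X]
    (f : X → ℝ) (K U : Set X) : Prop :=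
  ∀ u ∈ U, ∀ k ∈ K, k ≠ 0 → u + k ∈ U → f u ≤ f (u + k)

/-- Ideally convex subset: stable under infinite convex combinations of bounded sequences. -/
def IdeallyConvex {X : Type*} [NormedAddCommGroup X] [NormedSpace ℝ X] (C : Set X) : Prop :=
  ∀ (x : ℕ → X) (lam : ℕ → ℝ), (∀ n, x n ∈ C) → Bornology.IsBounded (Set.range x) →
    (∀ n, lam n ∈ Set.Icc (0 : ℝ) 1) → HasSum lam 1 →
      ∑' n, lam n • x n ∈ C

/-- `C‡`: the union, over finite dimensional subspaces `Z ⊆ X`, of the closures of `C ∩ Z`. -/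
def Ddag {X : Type*} [NormedAddCommGroup X] [NormedSpace ℝ X] (C : Set X) : Set X :=
  ⋃ (Z : Submodule ℝ X) (_ : FiniteDimensional ℝ Z), closure (C ∩ (Z : Set X))

/-- A normed space is reflexive if the canonical inclusion into its double dual is onto. -/
def IsReflexiveSpace (X : Type*) [NormedAddCommGroup X] [NormedSpace ℝ X] : Prop :=
  Function.Surjective (NormedSpace.inclusionInDoubleDual ℝ X)

section myaux
variable {X : Type*} [NormedAddCommGroup X] [NormedSpace ℝ X]

lemma quasi_sublevel (f : X → ℝ) (hq : QuasiconvexFun f) (q : ℝ) :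
    Convex ℝ {x : X | f x < q} := by
  intro x hx y hy a b ha hb hab
  have hb' : b = 1 - a := by linarith
  subst hb'
  have h := hq x y a ⟨ha, by linarith⟩
  exact lt_of_le_of_lt h (max_lt hx hy)

lemma cont_pt_le (f : X → ℝ) {q : ℝ} {z : X} (hz : ContinuousAt f z)
    (hcl : z ∈ closure {y : X | f y < q}) : f z ≤ q := by
  by_contra h
  push_neg at h
  have hU : f ⁻¹' (Set.Ioi q) ∈ 𝓝 z := hz.preimage_mem_nhds (Ioi_mem_nhds h)
  obtain ⟨y, hy1, hy2⟩ := mem_closure_iff_nhds.1 hcl _ hU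
  have : q < f y := hy1
  have : f y < q := hy2
  linarith

lemma le_of_mem_interior_closure_sublevel (f : X → ℝ) (hq : QuasiconvexFun f)
    (hd : DenselyContinuous f) {q : ℝ} {x : X}
    (hx : x ∈ interior (closure {y : X | f y < q})) : f x ≤ q := by
  by_contra hgt
  push_neg at hgt
  obtain ⟨r, hr, hball⟩ := Metric.mem_nhds_iff.1 (mem_interior_iff_mem_nhds.1 hx)
  obtain ⟨u, hu_cont, hu_ball⟩ :=
    hd.exists_mem_open Metric.isOpen_ball ⟨x, Metric.mem_ball_self hr⟩
  have hfu : f u ≤ q := cont_pt_le f hu_cont (hball hu_ball)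
  -- now show f x ≤ f u, contradiction
  have hlt : f u < f x := lt_of_le_of_lt hfu hgt
  have hV : f ⁻¹' (Set.Iio (f x)) ∩ Metric.ball x r ∈ 𝓝 u :=
    inter_mem (hu_cont.preimage_mem_nhds (Iio_mem_nhds hlt))
      (Metric.isOpen_ball.mem_nhds hu_ball)
  obtain ⟨ρ, hρ, hρsub⟩ := Metric.mem_nhds_iff.1 hV
  set Ru : X := x + (x - u) with hRu
  have hRu_ball : Ru ∈ Metric.ball x r := by
    have : dist Ru x = dist u x := by
      rw [dist_eq_norm, dist_eq_norm, hRu]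
      have h1 : x + (x - u) - x = -(u - x) := by abel
      rw [h1, norm_neg]
    rw [Metric.mem_ball, this]
    exact hu_ball
  set ρ' : ℝ := min ρ (r - dist Ru x) with hρ'
  have hρ'pos : 0 < ρ' := lt_min hρ (by rw [Metric.mem_ball] at hRu_ball; linarith)
  obtain ⟨z, hz_cont, hz_ball⟩ :=
    hd.exists_mem_open Metric.isOpen_ball ⟨Ru, Metric.mem_ball_self hρ'pos⟩
  have hz_ballxr : z ∈ Metric.ball x r := by
    rw [Metric.mem_ball] at hz_ball ⊢
    calc dist z x ≤ dist z Ru + dist Ru x := dist_triangle _ _ _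
      _ < ρ' + dist Ru x := by linarith
      _ ≤ r := by have := min_le_right ρ (r - dist Ru x); simp only [← hρ'] at this; linarith
  have hfz : f z ≤ q := cont_pt_le f hz_cont (hball hz_ballxr)
  set w : X := x + (x - z) with hw
  have hw_mem : w ∈ Metric.ball u ρ := by
    have heq : w - u = -(z - Ru) := by rw [hw, hRu]; abel
    rw [Metric.mem_ball, dist_eq_norm, heq, norm_neg, ← dist_eq_norm]
    calc dist z Ru < ρ' := by rwa [Metric.mem_ball] at hz_ball
      _ ≤ ρ := min_le_left _ _
  have hw_V : f w < f x := (hρsub hw_mem).1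
  have hcombo : (1/2 : ℝ) • w + (1 - 1/2 : ℝ) • z = x := by
    rw [hw]
    have : (1 - 1/2 : ℝ) = 1/2 := by norm_num
    rw [this]
    module
  have := hq w z (1/2) ⟨by norm_num, by norm_num⟩
  rw [hcombo] at this
  have hmax : max (f w) (f z) < f x := max_lt hw_V (lt_of_le_of_lt hfz hgt)
  linarith

lemma continuousAt_of_avoid_frontiers (f : X → ℝ) (hq : QuasiconvexFun f)
    (hd : DenselyContinuous f) (m : ℝ) {x : X} (hfx : m < f x)
    (h : ∀ q : ℚ, m < (q:ℝ) → x ∉ frontier (closure {y : X | f y < (q:ℝ)})) :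
    ContinuousAt f x := by
  rw [ContinuousAt, tendsto_order]
  constructor
  · intro b hb
    obtain ⟨q, hq1, hq2⟩ := exists_rat_btwn (show max b m < f x from max_lt hb hfx)
    have hqm : m < (q:ℝ) := lt_of_le_of_lt (le_max_right b m) hq1
    have hqb : b < (q:ℝ) := lt_of_le_of_lt (le_max_left b m) hq1
    have hnotint : x ∉ interior (closure {y : X | f y < (q:ℝ)}) := fun hin =>
      absurd (le_of_mem_interior_closure_sublevel f hq hd hin) (not_le.2 hq2)
    have hnotcl : x ∉ closure {y : X | f y < (q:ℝ)} := by
      intro hcl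
      exact h q hqm (by rw [← closure_diff_interior, closure_closure]; exact ⟨hcl, hnotint⟩)
    have hmem : (closure {y : X | f y < (q:ℝ)})ᶜ ∈ 𝓝 x :=
      isClosed_closure.isOpen_compl.mem_nhds hnotcl
    filter_upwards [hmem] with y hy
    by_contra hc
    push_neg at hc
    exact hy (subset_closure (show f y < (q:ℝ) from lt_of_le_of_lt hc hqb))
  · intro b hb
    obtain ⟨q, hq1, hq2⟩ := exists_rat_btwn hb
    have hqm : m < (q:ℝ) := hfx.trans hq1
    have hx_in : x ∈ interior (closure {y : X | f y < (q:ℝ)}) := by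
      have hx_cl : x ∈ closure {y : X | f y < (q:ℝ)} := subset_closure hq1
      by_contra hni
      exact h q hqm (by rw [← closure_diff_interior, closure_closure]; exact ⟨hx_cl, hni⟩)
    filter_upwards [isOpen_interior.mem_nhds hx_in] with y hy
    exact lt_of_le_of_lt (le_of_mem_interior_closure_sublevel f hq hd hy) hq2

end myaux

section aux3
variable {X : Type*} [NormedAddCommGroup X] [NormedSpace ℝ X]

lemma section_B_null (D : Set X) (hcv : Convex ℝ D) (w x : X) :
    volume {t : ℝ | x + t • w ∈ frontier D ∧ ∃ s : ℝ, (x + t • w) + s • w ∈ interior D} = 0 := by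
  set S := {t : ℝ | x + t • w ∈ frontier D ∧ ∃ s : ℝ, (x + t • w) + s • w ∈ interior D} with hSdef
  rcases eq_empty_or_nonempty S with h | ⟨t1, ht1⟩
  · simp [h]
  · obtain ⟨hfr1, s', hint'⟩ := ht1
    have ht0 : x + (t1 + s') • w ∈ interior D := by
      rw [add_smul, ← add_assoc]; exact hint'
    set t0 : ℝ := t1 + s' with ht0def
    have key : ∀ a b : ℝ, x + a • w ∈ frontier D → x + b • w ∈ frontier D →
        ((t0 < a ∧ a < b) ∨ (b < a ∧ a < t0)) → False := by
      intro a b hfa hfb hcase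
      have hbt0 : b - t0 ≠ 0 := by rcases hcase with ⟨h1, h2⟩ | ⟨h1, h2⟩ <;> intro hc <;> nlinarith
      set l1 : ℝ := (b - a) / (b - t0) with hl1def
      set l2 : ℝ := (a - t0) / (b - t0) with hl2def
      have hl1 : 0 < l1 := by
        rcases hcase with ⟨h1, h2⟩ | ⟨h1, h2⟩
        · exact div_pos (by linarith) (by linarith)
        · apply div_pos_of_neg_of_neg <;> linarith
      have hl2 : 0 < l2 := by
        rcases hcase with ⟨h1, h2⟩ | ⟨h1, h2⟩
        · exact div_pos (by linarith) (by linarith)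
        · apply div_pos_of_neg_of_neg <;> linarith
      have hsum : l1 + l2 = 1 := by
        rw [hl1def, hl2def, ← add_div, div_eq_one_iff_eq hbt0]; ring
      have hcoef : l1 * t0 + l2 * b = a := by
        rw [hl1def, hl2def]; field_simp; ring
      have hmem : x + a • w ∈ openSegment ℝ (x + t0 • w) (x + b • w) := by
        refine ⟨l1, l2, hl1, hl2, hsum, ?_⟩
        have : l1 • (x + t0 • w) + l2 • (x + b • w)
            = (l1 + l2) • x + (l1 * t0 + l2 * b) • w := by
          module
        rw [this, hsum, hcoef, one_smul]
      have hin := hcv.openSegment_interior_closure_subset_interior ht0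
        (frontier_subset_closure hfb) hmem
      rw [← closure_diff_interior] at hfa
      exact hfa.2 hin
    have hsub : S ⊆ insert t0 (({t : ℝ | x + t • w ∈ frontier D} ∩ Ioi t0) ∪
        ({t : ℝ | x + t • w ∈ frontier D} ∩ Iio t0)) := by
      intro t ht
      rcases lt_trichotomy t t0 with h | h | h
      · exact Or.inr (Or.inr ⟨ht.1, h⟩)
      · exact Or.inl h
      · exact Or.inr (Or.inl ⟨ht.1, h⟩)
    apply measure_mono_null hsub
    have hc1 : ({t : ℝ | x + t • w ∈ frontier D} ∩ Ioi t0).Subsingleton := by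
      intro a ha b hb
      by_contra hne
      rcases lt_or_gt_of_ne hne with h | h
      · exact key a b ha.1 hb.1 (Or.inl ⟨ha.2, h⟩)
      · exact key b a hb.1 ha.1 (Or.inl ⟨hb.2, h⟩)
    have hc2 : ({t : ℝ | x + t • w ∈ frontier D} ∩ Iio t0).Subsingleton := by
      intro a ha b hb
      by_contra hne
      rcases lt_or_gt_of_ne hne with h | h
      · exact key b a hb.1 ha.1 (Or.inr ⟨h, hb.2⟩)
      · exact key a b ha.1 hb.1 (Or.inr ⟨h, ha.2⟩)
    have : (insert t0 (({t : ℝ | x + t • w ∈ frontier D} ∩ Ioi t0) ∪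
        ({t : ℝ | x + t • w ∈ frontier D} ∩ Iio t0))).Countable :=
      (Set.Countable.union hc1.countable hc2.countable).insert t0
    exact this.measure_zero _

lemma section_E_null {ν : X → ℝ} {C : NNReal} (hlip : LipschitzWith C ν) (w x : X) :
    volume {t : ℝ | ∃ k : ℕ, ∀ s : ℝ, 0 < s →
      s / (k + 1) ≤ ν ((x + t • w) + s • w) + ν ((x + t • w) - s • w) - 2 * ν (x + t • w)} = 0 := by
  set g : ℝ → ℝ := fun t => ν (x + t • w) with hgdef
  have hglip : LipschitzWith (C * ‖w‖₊) g := by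
    apply LipschitzWith.of_dist_le_mul
    intro a b
    calc dist (g a) (g b) ≤ C * dist (x + a • w) (x + b • w) := hlip.dist_le_mul _ _
      _ = C * (‖(a - b) • w‖) := by
          rw [dist_eq_norm]
          congr 2
          rw [sub_smul]; abel
      _ = (C * ‖w‖₊ : NNReal) * dist a b := by
          rw [norm_smul, Real.norm_eq_abs, ← Real.dist_eq]
          push_cast
          ring
  have hae := hglip.ae_differentiableAt (μ := volume)
  rw [ae_iff] at hae
  apply measure_mono_null ?_ hae
  intro t ht
  obtain ⟨k, hk⟩ := ht
  simp only [mem_setOf_eq]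
  intro hdiff
  have hderiv := hdiff.hasDerivAt
  have hslope := hasDerivAt_iff_tendsto_slope.1 hderiv
  set d := deriv g t with hd
  -- sequences approaching from right and left
  have hseq : Tendsto (fun j : ℕ => (1 : ℝ) / (j + 1)) atTop (𝓝 0) :=
    tendsto_one_div_add_atTop_nhds_zero_nat
  have hu : Tendsto (fun j : ℕ => t + 1 / (j + 1)) atTop (𝓝[≠] t) := by
    apply tendsto_nhdsWithin_of_tendsto_nhds_of_eventually_within
    · simpa using tendsto_const_nhds.add hseq
    · filter_upwards with j
      have : (0:ℝ) < 1 / (j + 1) := by positivity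
      simp only [mem_compl_iff, mem_singleton_iff]
      intro hc
      nlinarith [hc]
  have hv : Tendsto (fun j : ℕ => t - 1 / (j + 1)) atTop (𝓝[≠] t) := by
    apply tendsto_nhdsWithin_of_tendsto_nhds_of_eventually_within
    · simpa using tendsto_const_nhds.sub hseq
    · filter_upwards with j
      have : (0:ℝ) < 1 / (j + 1) := by positivity
      simp only [mem_compl_iff, mem_singleton_iff]
      intro hc
      nlinarith [hc]
  have h1 : Tendsto (fun j : ℕ => slope g t (t + 1 / (j + 1))) atTop (𝓝 d) := hslope.comp hu
  have h2 : Tendsto (fun j : ℕ => slope g t (t - 1 / (j + 1))) atTop (𝓝 d) := hslope.comp hv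
  have h3 : Tendsto (fun j : ℕ => slope g t (t + 1 / (j + 1)) - slope g t (t - 1 / (j + 1)))
      atTop (𝓝 0) := by
    have := h1.sub h2
    rwa [sub_self] at this
  have hbound : ∀ j : ℕ, (1 : ℝ) / (k + 1) ≤
      slope g t (t + 1 / (j + 1)) - slope g t (t - 1 / (j + 1)) := by
    intro j
    set s : ℝ := 1 / (j + 1) with hs
    have hspos : 0 < s := by positivity
    have hkk := hk s hspos
    have e1 : (x + t • w) + s • w = x + (t + s) • w := by rw [add_smul]; abel
    have e2 : (x + t • w) - s • w = x + (t - s) • w := by rw [sub_smul]; abel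
    rw [e1, e2] at hkk
    have hsl1 : slope g t (t + s) = (g (t + s) - g t) / s := by
      rw [slope_def_field]; congr 1; ring
    have hsl2 : slope g t (t - s) = (g (t - s) - g t) / (-s) := by
      rw [slope_def_field]; congr 1; ring
    rw [hsl1, hsl2]
    rw [div_neg, sub_neg_eq_add, ← add_div]
    have heq : g (t + s) - g t + (g (t - s) - g t) = g (t + s) + g (t - s) - 2 * g t := by ring
    rw [heq, le_div_iff₀ hspos]
    have h15 : 1 / ((k:ℝ) + 1) * s = s / ((k:ℝ) + 1) := by ring
    rw [h15]
    exact hkk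
  have := ge_of_tendsto h3 (Eventually.of_forall hbound)
  have hkpos : (0:ℝ) < 1 / (k + 1) := by positivity
  linarith

end aux3

section aux4
variable {X : Type*} [NormedAddCommGroup X] [NormedSpace ℝ X]

lemma slope_bound' {g : ℝ → ℝ} (hg : ConvexOn ℝ univ g) {t t0 : ℝ} (h0 : 0 < t) (h1 : t ≤ t0) :
    g t ≤ g 0 + t * ((g t0 - g 0) / t0) := by
  have hsec := hg.secant_mono (a := 0) (x := t) (y := t0) (mem_univ _) (mem_univ _) (mem_univ _)
    (ne_of_gt h0) (ne_of_gt (h0.trans_le h1)) h1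
  rw [sub_zero, sub_zero] at hsec
  have h2 : g t - g 0 ≤ t * ((g t0 - g 0) / t0) := by
    have := mul_le_mul_of_nonneg_left hsec (le_of_lt h0)
    calc g t - g 0 = t * ((g t - g 0) / t) := by field_simp
      _ ≤ t * ((g t0 - g 0) / t0) := this
  linarith

lemma convexOn_line' {ν : X → ℝ} (hν : ConvexOn ℝ univ ν) (x w : X) :
    ConvexOn ℝ univ (fun t : ℝ => ν (x + t • w)) := by
  refine ⟨convex_univ, ?_⟩
  intro s _ t _ a b ha hb hab
  have hb' : b = 1 - a := by linarith
  subst hb'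
  have hcombo : x + (a • s + (1-a) • t) • w = a • (x + s • w) + (1-a) • (x + t • w) := by
    simp only [smul_eq_mul]
    module
  simp only [smul_eq_mul] at hcombo ⊢
  rw [hcombo]
  exact hν.2 (mem_univ _) (mem_univ _) ha hb (by linarith)

set_option maxHeartbeats 1000000 in
lemma covering_lemma (D : Set X) (hcl : IsClosed D) (hcv : Convex ℝ D) (h0 : (0:X) ∈ interior D)
    (ξ : ℕ → X) (hξ : Dense (Submodule.span ℝ (Set.range ξ) : Set X))
    {p : X} (hp : p ∈ frontier D)
    (hB : ∀ n, ¬ ∃ t : ℝ, p + t • ξ n ∈ interior D)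
    (hE : ∀ n, ¬ ∃ k : ℕ, ∀ t : ℝ, 0 < t →
      t / (k + 1) ≤ gauge D (p + t • ξ n) + gauge D (p - t • ξ n) - 2 * gauge D p) :
    False := by
  classical
  set ν : X → ℝ := gauge D with hνdef
  have hD0 : D ∈ 𝓝 0 := mem_interior_iff_mem_nhds.1 h0
  have habs : Absorbent ℝ D := absorbent_nhds_zero hD0
  have hint : {z : X | ν z < 1} = interior D := gauge_lt_one_eq_interior hcv hD0
  obtain ⟨ρ, hρ, hball⟩ := Metric.mem_nhds_iff.1 hD0
  have hνle : ∀ z : X, ν z ≤ ‖z‖ / ρ := fun z => by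
    rw [hνdef, ← gauge_ball hρ.le]
    exact gauge_mono (absorbent_ball_zero hρ) hball z
  have hconv : ConvexOn ℝ univ ν := by
    refine ⟨convex_univ, ?_⟩
    intro x _ y _ a b ha hb hab
    calc ν (a • x + b • y) ≤ ν (a • x) + ν (b • y) := gauge_add_le hcv habs _ _
      _ = a * ν x + b * ν y := by
          rw [hνdef, gauge_smul_of_nonneg ha, gauge_smul_of_nonneg hb, smul_eq_mul, smul_eq_mul]
  have hν1 : ν p = 1 := by
    have h1 : ν p ≤ 1 := gauge_le_one_of_mem (by
      have := frontier_subset_closure hp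
      rwa [hcl.closure_eq] at this)
    have h2 : ¬ ν p < 1 := by
      intro hlt
      rw [← closure_diff_interior] at hp
      exact hp.2 (hint ▸ hlt : p ∈ interior D)
    linarith [not_lt.1 h2]
  -- Step A : lines avoid the interior
  have hA : ∀ n (t : ℝ), 1 ≤ ν (p + t • ξ n) := by
    intro n t
    by_contra hlt
    push_neg at hlt
    exact hB n ⟨t, hint ▸ hlt⟩
  -- Step B : one-sided upper slope bounds
  have hBstep : ∀ n, ∀ ε : ℝ, 0 < ε → ∃ T : ℝ, 0 < T ∧ ∀ t : ℝ, 0 < t → t ≤ T →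
      ν (p + t • ξ n) ≤ 1 + ε * t ∧ ν (p - t • ξ n) ≤ 1 + ε * t := by
    intro n ε hε
    obtain ⟨k, hk⟩ := exists_nat_one_div_lt hε
    have hnk := hE n
    push_neg at hnk
    obtain ⟨t0, ht0pos, ht0⟩ := hnk k
    have ha1 : 1 ≤ ν (p + t0 • ξ n) := hA n t0
    have ha2 : 1 ≤ ν (p - t0 • ξ n) := by
      have := hA n (-t0)
      rwa [neg_smul, ← sub_eq_add_neg] at this
    refine ⟨t0, ht0pos, fun t ht htle => ?_⟩
    constructor
    · have hgconv : ConvexOn ℝ univ (fun s : ℝ => ν (p + s • ξ n)) := convexOn_line' hconv p (ξ n)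
      have := slope_bound' hgconv ht htle
      simp only [zero_smul, add_zero] at this
      rw [hν1] at this
      have hq1 : ν (p + t0 • ξ n) - 1 < t0 / (k + 1) := by
        have : ν (p - t0 • ξ n) - 1 ≥ 0 := by linarith
        linarith
      have : ν (p + t • ξ n) ≤ 1 + t * ((ν (p + t0 • ξ n) - 1) / t0) := this
      have hq2 : (ν (p + t0 • ξ n) - 1) / t0 < 1 / (k+1) := by
        rw [div_lt_div_iff₀ ht0pos (by positivity)]
        calc (ν (p + t0 • ξ n) - 1) * ((k:ℝ) + 1) < (t0 / (k+1)) * ((k:ℝ)+1) := by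
              apply mul_lt_mul_of_pos_right hq1 (by positivity)
          _ = 1 * t0 := by field_simp
      nlinarith [mul_lt_mul_of_pos_left hq2 ht, hk]
    · have hgconv : ConvexOn ℝ univ (fun s : ℝ => ν (p + s • (-(ξ n)))) :=
        convexOn_line' hconv p (-(ξ n))
      have := slope_bound' hgconv ht htle
      simp only [zero_smul, add_zero, smul_neg, ← sub_eq_add_neg, sub_zero] at this
      rw [hν1] at this
      have hq1 : ν (p - t0 • ξ n) - 1 < t0 / (k + 1) := by
        have : ν (p + t0 • ξ n) - 1 ≥ 0 := by linarith
        linarith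
      have hq2 : (ν (p - t0 • ξ n) - 1) / t0 < 1 / (k+1) := by
        rw [div_lt_div_iff₀ ht0pos (by positivity)]
        calc (ν (p - t0 • ξ n) - 1) * ((k:ℝ) + 1) < (t0 / (k+1)) * ((k:ℝ)+1) := by
              apply mul_lt_mul_of_pos_right hq1 (by positivity)
          _ = 1 * t0 := by field_simp
      nlinarith [mul_lt_mul_of_pos_left hq2 ht, hk]
  -- approximation of p by an element of the span
  obtain ⟨y, hy_span, hy_close⟩ : ∃ y ∈ (Submodule.span ℝ (Set.range ξ) : Set X),
      ‖p - y‖ < ρ / 2 := by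
    have := Metric.mem_closure_iff.1 (by rw [hξ.closure_eq]; trivial : p ∈
      closure (Submodule.span ℝ (Set.range ξ) : Set X)) (ρ/2) (by positivity)
    obtain ⟨y, hy1, hy2⟩ := this
    exact ⟨y, hy1, by rwa [dist_eq_norm] at hy2⟩
  obtain ⟨km, c, gf, hsum⟩ := Submodule.mem_span_set'.1 hy_span
  choose nf hnf using fun i : Fin km => (gf i).2
  have hclaim : ∀ ε : ℝ, 0 < ε → ∃ t : ℝ, 0 < t ∧ ν (p + t • y) ≤ 1 + ε * t := by
    intro ε hε
    rcases Nat.eq_zero_or_pos km with hkm | hkm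
    · refine ⟨1, one_pos, ?_⟩
      have hy0 : y = 0 := by
        rw [← hsum]
        subst hkm
        simp
      rw [hy0]
      simp only [smul_zero, add_zero, hν1]
      linarith
    · haveI : Nonempty (Fin km) := ⟨⟨0, hkm⟩⟩
      have hkmR : (0:ℝ) < (km:ℝ) := by exact_mod_cast hkm
      set Ctot : ℝ := ∑ i : Fin km, |c i| with hC
      have hCnn : 0 ≤ Ctot := Finset.sum_nonneg fun i _ => abs_nonneg _
      set ε' : ℝ := ε / (Ctot + 1) with hε'
      have hε'pos : 0 < ε' := by positivity
      choose T hTpos hT using fun i : Fin km => hBstep (nf i) ε' hε'pos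
      set t : ℝ := Finset.univ.inf' Finset.univ_nonempty
        (fun i : Fin km => T i / ((km:ℝ) * |c i| + 1)) with htdef
      have htpos : 0 < t := by
        rw [htdef, Finset.lt_inf'_iff]
        intro i _
        have := hTpos i
        positivity
      have hti : ∀ i : Fin km, (km:ℝ) * t * |c i| ≤ T i := by
        intro i
        have hle : t ≤ T i / ((km:ℝ) * |c i| + 1) :=
          Finset.inf'_le _ (Finset.mem_univ i)
        have hd : (0:ℝ) < (km:ℝ) * |c i| + 1 := by positivity
        rw [le_div_iff₀ hd] at hle
        nlinarith [abs_nonneg (c i), htpos]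
      refine ⟨t, htpos, ?_⟩
      have hcombo : p + t • y = ∑ i : Fin km, (1/(km:ℝ)) • (p + ((km:ℝ)*t*c i) • ξ (nf i)) := by
        have hterm : ∀ i : Fin km, (1/(km:ℝ)) • (p + ((km:ℝ)*t*c i) • ξ (nf i))
            = (1/(km:ℝ)) • p + (t * c i) • ξ (nf i) := by
          intro i
          rw [smul_add, smul_smul]
          congr 2
          field_simp
        rw [Finset.sum_congr rfl (fun i _ => hterm i), Finset.sum_add_distrib,
          Finset.sum_const, Finset.card_univ, Fintype.card_fin]
        have h1 : (km : ℕ) • ((1/(km:ℝ)) • p) = p := by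
          rw [← Nat.cast_smul_eq_nsmul ℝ, smul_smul]
          rw [show (km:ℝ) * (1/(km:ℝ)) = 1 by field_simp, one_smul]
        have h2 : ∑ i : Fin km, (t * c i) • ξ (nf i) = t • y := by
          rw [← hsum, Finset.smul_sum]
          apply Finset.sum_congr rfl
          intro i _
          rw [hnf i, smul_smul]
        rw [h1, h2]
      rw [hcombo]
      have hjen := hconv.map_sum_le (t := Finset.univ) (w := fun _ : Fin km => 1/(km:ℝ))
        (p := fun i => p + ((km:ℝ)*t*c i) • ξ (nf i))
        (fun i _ => by positivity)
        (by rw [Finset.sum_const, Finset.card_univ, Fintype.card_fin, nsmul_eq_mul]; field_simp)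
        (fun i _ => mem_univ _)
      have hterm_bound : ∀ i : Fin km,
          ν (p + ((km:ℝ)*t*c i) • ξ (nf i)) ≤ 1 + ε' * ((km:ℝ)*t*|c i|) := by
        intro i
        rcases lt_trichotomy (c i) 0 with hc | hc | hc
        · have habsc : |c i| = -(c i) := abs_of_neg hc
          have heq : p + ((km:ℝ)*t*c i) • ξ (nf i) = p - ((km:ℝ)*t*|c i|) • ξ (nf i) := by
            rw [habsc, sub_eq_add_neg, ← neg_smul]
            congr 1
            ring_nf
          rw [heq]
          have hcpos : 0 < |c i| := abs_pos.2 (ne_of_lt hc)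
          have hpos : 0 < (km:ℝ)*t*|c i| := by positivity
          exact (hT i _ hpos (hti i)).2
        · simp only [hc, abs_zero, mul_zero, zero_smul, add_zero, hν1]
          linarith
        · have habsc : |c i| = c i := abs_of_pos hc
          have hpos : 0 < (km:ℝ)*t*|c i| := by positivity
          have := (hT i _ hpos (hti i)).1
          rwa [habsc] at this ⊢
      calc ν (∑ i : Fin km, (1/(km:ℝ)) • (p + ((km:ℝ)*t*c i) • ξ (nf i)))
          ≤ ∑ i : Fin km, (1/(km:ℝ)) * ν (p + ((km:ℝ)*t*c i) • ξ (nf i)) := hjen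
        _ ≤ ∑ i : Fin km, (1/(km:ℝ)) * (1 + ε' * ((km:ℝ)*t*|c i|)) :=
            Finset.sum_le_sum fun i _ =>
              mul_le_mul_of_nonneg_left (hterm_bound i) (by positivity)
        _ = ∑ i : Fin km, ((1/(km:ℝ)) + (ε' * t) * |c i|) := by
            apply Finset.sum_congr rfl
            intro i _
            field_simp
        _ = 1 + ε' * t * Ctot := by
            rw [Finset.sum_add_distrib, Finset.sum_const, Finset.card_univ, Fintype.card_fin,
              ← Finset.mul_sum, nsmul_eq_mul, ← hC]
            rw [show (km:ℝ) * (1/(km:ℝ)) = 1 by field_simp]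
        _ ≤ 1 + ε * t := by
            have hh : ε' * Ctot ≤ ε := by
              rw [hε', div_mul_eq_mul_div, div_le_iff₀ (by positivity)]
              nlinarith
            nlinarith [htpos.le]
  obtain ⟨t, htpos, hty⟩ := hclaim (1/4) (by norm_num)
  have hfin1 : ν ((1+t) • p) = 1 + t := by
    rw [hνdef, gauge_smul_of_nonneg (by linarith : (0:ℝ) ≤ 1 + t), smul_eq_mul, ← hνdef, hν1,
      mul_one]
  have hsplit : (1+t) • p = (p + t • y) + t • (p - y) := by module
  have h2 : ν ((1+t) • p) ≤ ν (p + t • y) + ν (t • (p - y)) := by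
    rw [hsplit]
    exact gauge_add_le hcv habs _ _
  have h3 : ν (t • (p - y)) ≤ t * (‖p - y‖ / ρ) := by
    calc ν (t • (p-y)) = t * ν (p - y) := by
          rw [hνdef, gauge_smul_of_nonneg htpos.le, smul_eq_mul]
      _ ≤ t * (‖p - y‖/ρ) := mul_le_mul_of_nonneg_left (hνle _) htpos.le
  have h4 : ‖p - y‖ / ρ < 1/2 := by
    rw [div_lt_iff₀ hρ]
    linarith
  nlinarith

end aux4

section aux5
variable {X : Type*} [NormedAddCommGroup X] [NormedSpace ℝ X]


lemma gauge_lipschitz (D : Set X) (hcv : Convex ℝ D) {ρ : ℝ} (hρ : 0 < ρ)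
    (hball : Metric.ball (0:X) ρ ⊆ D) :
    LipschitzWith (Real.toNNReal ρ⁻¹) (gauge D) := by
  have hD0 : D ∈ 𝓝 0 := Filter.mem_of_superset (Metric.ball_mem_nhds 0 hρ) hball
  have habs : Absorbent ℝ D := absorbent_nhds_zero hD0
  have hνle : ∀ z : X, gauge D z ≤ ‖z‖ / ρ := fun z => by
    rw [← gauge_ball hρ.le]
    exact gauge_mono (absorbent_ball_zero hρ) hball z
  apply LipschitzWith.of_dist_le_mul
  intro a b
  have key : ∀ u v : X, gauge D u - gauge D v ≤ ‖u - v‖ / ρ := by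
    intro u v
    have h1 : gauge D u ≤ gauge D v + gauge D (u - v) := by
      have := gauge_add_le hcv habs v (u - v)
      rwa [add_sub_cancel] at this
    linarith [hνle (u - v)]
  rw [Real.dist_eq, abs_sub_le_iff, dist_eq_norm]
  constructor
  · have := key a b
    rw [Real.coe_toNNReal _ (by positivity)]
    calc gauge D a - gauge D b ≤ ‖a - b‖ / ρ := this
      _ = ρ⁻¹ * ‖a - b‖ := div_eq_inv_mul _ _
  · have := key b a
    rw [Real.coe_toNNReal _ (by positivity)]
    calc gauge D b - gauge D a ≤ ‖b - a‖ / ρ := this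
      _ = ρ⁻¹ * ‖a - b‖ := by rw [norm_sub_rev]; exact div_eq_inv_mul _ _

lemma frontier_decomp0 [MeasurableSpace X] [BorelSpace X]
    (D : Set X) (hcl : IsClosed D) (hcv : Convex ℝ D) (h0 : (0:X) ∈ interior D)
    (ξ : ℕ → X) (hξ : Dense (Submodule.span ℝ (Set.range ξ) : Set X)) :
    ∃ Nn : ℕ → Set X, frontier D = ⋃ n, Nn n ∧
      ∀ n, MeasurableSet (Nn n) ∧
        ∀ x : X, volume {t : ℝ | x + t • ξ n ∈ Nn n} = 0 := by
  classical
  have hD0 : D ∈ 𝓝 0 := mem_interior_iff_mem_nhds.1 h0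
  obtain ⟨ρ, hρ, hball⟩ := Metric.mem_nhds_iff.1 hD0
  have hlip : LipschitzWith (Real.toNNReal ρ⁻¹) (gauge D) := gauge_lipschitz D hcv hρ hball
  have hcont : Continuous (gauge D) := hlip.continuous
  set B : ℕ → Set X := fun n =>
    frontier D ∩ {p | ∃ t : ℝ, p + t • ξ n ∈ interior D} with hBdef
  set E : ℕ → Set X := fun n =>
    frontier D ∩ {p | ∃ k : ℕ, ∀ t : ℝ, 0 < t →
      t / (k + 1) ≤ gauge D (p + t • ξ n) + gauge D (p - t • ξ n) - 2 * gauge D p} with hEdef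
  refine ⟨fun n => B n ∪ E n, ?_, ?_⟩
  · apply Subset.antisymm
    · intro p hp
      by_contra hnot
      simp only [mem_iUnion, not_exists] at hnot
      refine covering_lemma D hcl hcv h0 ξ hξ hp (fun n hex => ?_) (fun n hex => ?_)
      · exact hnot n (Or.inl ⟨hp, hex⟩)
      · exact hnot n (Or.inr ⟨hp, hex⟩)
    · refine iUnion_subset fun n => union_subset ?_ ?_
      · exact inter_subset_left
      · exact inter_subset_left
  · intro n
    constructor
    · apply MeasurableSet.union
      · apply (isClosed_frontier.measurableSet).inter
        have hopen : IsOpen {p : X | ∃ t : ℝ, p + t • ξ n ∈ interior D} := by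
          have heq : {p : X | ∃ t : ℝ, p + t • ξ n ∈ interior D}
              = ⋃ t : ℝ, (fun p : X => p + t • ξ n) ⁻¹' interior D := by
            ext z; simp [mem_iUnion]
          rw [heq]
          exact isOpen_iUnion fun t =>
            isOpen_interior.preimage (continuous_id.add continuous_const)
        exact hopen.measurableSet
      · apply (isClosed_frontier.measurableSet).inter
        have heq : {p : X | ∃ k : ℕ, ∀ t : ℝ, 0 < t →
            t / (k + 1) ≤ gauge D (p + t • ξ n) + gauge D (p - t • ξ n) - 2 * gauge D p}
            = ⋃ k : ℕ, ⋂ (t : ℝ), ⋂ (_ : 0 < t),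
              {p : X | t / (k + 1) ≤ gauge D (p + t • ξ n) + gauge D (p - t • ξ n)
                - 2 * gauge D p} := by
          ext z; simp [mem_iUnion, mem_iInter]
        rw [heq]
        refine MeasurableSet.iUnion fun k => ?_
        apply IsClosed.measurableSet
        refine isClosed_iInter fun t => isClosed_iInter fun ht => ?_
        apply isClosed_le continuous_const
        have hc1 : Continuous fun p : X => gauge D (p + t • ξ n) :=
          hcont.comp (continuous_id.add continuous_const)
        have hc2 : Continuous fun p : X => gauge D (p - t • ξ n) :=
          hcont.comp (continuous_id.sub continuous_const)
        exact (hc1.add hc2).sub (continuous_const.mul hcont)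
    · intro x
      apply measure_union_null
      · have heq : {t : ℝ | x + t • ξ n ∈ B n} ⊆ {t : ℝ | x + t • ξ n ∈ frontier D ∧
            ∃ s : ℝ, (x + t • ξ n) + s • ξ n ∈ interior D} := by
          intro t ht
          exact ⟨ht.1, ht.2⟩
        exact measure_mono_null heq (section_B_null D hcv (ξ n) x)
      · have heq : {t : ℝ | x + t • ξ n ∈ E n} ⊆ {t : ℝ | ∃ k : ℕ, ∀ s : ℝ, 0 < s →
            s / (k + 1) ≤ gauge D ((x + t • ξ n) + s • ξ n) + gauge D ((x + t • ξ n) - s • ξ n)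
              - 2 * gauge D (x + t • ξ n)} := by
          intro t ht
          exact ht.2
        exact measure_mono_null heq (section_E_null hlip (ξ n) x)

lemma frontier_decomp [MeasurableSpace X] [BorelSpace X]
    (D : Set X) (hcl : IsClosed D) (hcv : Convex ℝ D) (hne : (interior D).Nonempty)
    (ξ : ℕ → X) (hξ : Dense (Submodule.span ℝ (Set.range ξ) : Set X)) :
    ∃ Nn : ℕ → Set X, frontier D = ⋃ n, Nn n ∧
      ∀ n, MeasurableSet (Nn n) ∧
        ∀ x : X, volume {t : ℝ | x + t • ξ n ∈ Nn n} = 0 := by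
  obtain ⟨x₀, hx₀⟩ := hne
  set s : Set X := (fun z : X => x₀ + z) ⁻¹' D with hsdef
  have hhom : ∀ A : Set X, (fun z : X => x₀ + z) ⁻¹' interior A = interior ((fun z : X => x₀ + z) ⁻¹' A) :=
    fun A => (Homeomorph.addLeft x₀).preimage_interior A
  have hfro : ∀ A : Set X, (fun z : X => x₀ + z) ⁻¹' frontier A = frontier ((fun z : X => x₀ + z) ⁻¹' A) :=
    fun A => (Homeomorph.addLeft x₀).preimage_frontier A
  have hscl : IsClosed s := hcl.preimage (continuous_const.add continuous_id)
  have hscv : Convex ℝ s := by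
    intro a ha b hb l1 l2 hl1 hl2 hsum
    show x₀ + (l1 • a + l2 • b) ∈ D
    have hl2' : l2 = 1 - l1 := by linarith
    subst hl2'
    have : x₀ + (l1 • a + (1 - l1) • b) = l1 • (x₀ + a) + (1 - l1) • (x₀ + b) := by
      module
    rw [this]
    exact hcv ha hb hl1 hl2 hsum
  have hs0 : (0:X) ∈ interior s := by
    have : (0:X) ∈ (fun z : X => x₀ + z) ⁻¹' interior D := by
      simp only [mem_preimage, add_zero]
      exact hx₀
    rwa [hhom D] at this
  obtain ⟨Nn, hNn1, hNn2⟩ := frontier_decomp0 s hscl hscv hs0 ξ hξ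
  refine ⟨fun n => (fun p : X => -x₀ + p) ⁻¹' Nn n, ?_, ?_⟩
  · ext p
    have hp : p ∈ frontier D ↔ (-x₀ + p) ∈ frontier s := by
      rw [← hfro D]
      simp only [hsdef, mem_preimage]
      constructor
      · intro h; rwa [show x₀ + (-x₀ + p) = p by abel]
      · intro h; rwa [show x₀ + (-x₀ + p) = p by abel] at h
    rw [hp, hNn1]
    simp [mem_iUnion]
  · intro n
    refine ⟨(hNn2 n).1.preimage (continuous_const.add continuous_id).measurable, fun x => ?_⟩
    have heq : {t : ℝ | x + t • ξ n ∈ (fun p : X => -x₀ + p) ⁻¹' Nn n}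
        = {t : ℝ | (-x₀ + x) + t • ξ n ∈ Nn n} := by
      ext t
      simp only [mem_setOf_eq, mem_preimage]
      rw [show -x₀ + (x + t • ξ n) = (-x₀ + x) + t • ξ n by abel]
    rw [heq]
    exact (hNn2 n).2 (-x₀ + x)
end aux5

/-- On a separable Banach space, the points of `X \ {f ≤ m}` at which `f` is not
continuous are contained in an Aronszajn null set. -/
theorem stmt_4 {X : Type*} [NormedAddCommGroup X] [NormedSpace ℝ X] [CompleteSpace X]
    [TopologicalSpace.SeparableSpace X] [MeasurableSpace X] [BorelSpace X]
    (f : X → ℝ) (hq : QuasiconvexFun f) (hd : DenselyContinuous f)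
    (m : ℝ) (hm : IsTopEssInf f m) :
    ∃ N : Set X, AronszajnNull N ∧ {x : X | m < f x ∧ ¬ ContinuousAt f x} ⊆ N := by
  classical
  set Fr : ℚ → Set X := fun q =>
    if m < (q:ℝ) then frontier (closure {x : X | f x < (q:ℝ)}) else ∅ with hFrdef
  have hFrsub : ∀ q : ℚ, m < (q:ℝ) → Fr q = frontier (closure {x : X | f x < (q:ℝ)}) :=
    fun q h => by rw [hFrdef]; simp only [if_pos h]
  have hintq : ∀ q : ℚ, m < (q:ℝ) → (interior (closure {x : X | f x < (q:ℝ)})).Nonempty := by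
    intro q hq'
    by_contra hne
    rw [not_nonempty_iff_eq_empty] at hne
    apply hm.2 q hq'
    apply IsMeagre.mono (subset_closure) ?_
    rw [isMeagre_iff_countable_union_isNowhereDense]
    refine ⟨{closure {x : X | f x < (q:ℝ)}}, ?_, countable_singleton _, by simp⟩
    intro u hu
    rw [mem_singleton_iff] at hu
    subst hu
    rw [IsNowhereDense, closure_closure]
    exact hne
  refine ⟨⋃ q : ℚ, Fr q, ⟨?_, ?_⟩, ?_⟩
  · refine MeasurableSet.iUnion fun q => ?_
    by_cases h : m < (q:ℝ)
    · rw [hFrsub q h]; exact isClosed_frontier.measurableSet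
    · rw [hFrdef]; simp only [if_neg h]; exact MeasurableSet.empty
  · intro ξ hξ
    have hdec : ∀ q : ℚ, ∃ Nn : ℕ → Set X, Fr q = ⋃ n, Nn n ∧
        ∀ n, MeasurableSet (Nn n) ∧
          ∀ x : X, volume {t : ℝ | x + t • ξ n ∈ Nn n} = 0 := by
      intro q
      by_cases h : m < (q:ℝ)
      · obtain ⟨Nn, h1, h2⟩ := frontier_decomp (closure {x : X | f x < (q:ℝ)}) isClosed_closure
          ((quasi_sublevel f hq (q:ℝ)).closure) (hintq q h) ξ hξ
        exact ⟨Nn, by rw [hFrsub q h]; exact h1, h2⟩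
      · refine ⟨fun _ => ∅, by rw [hFrdef]; simp [if_neg h], fun n => ⟨MeasurableSet.empty, fun x => by simp⟩⟩
    choose G hG1 hG2 using hdec
    refine ⟨fun n => ⋃ q : ℚ, G q n, ?_, ?_⟩
    · ext p
      simp only [mem_iUnion]
      constructor
      · rintro ⟨q, hp⟩
        rw [hG1 q] at hp
        obtain ⟨n, hn⟩ := mem_iUnion.1 hp
        exact ⟨n, q, hn⟩
      · rintro ⟨n, q, hp⟩
        exact ⟨q, by rw [hG1 q]; exact mem_iUnion.2 ⟨n, hp⟩⟩
    · intro n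
      refine ⟨MeasurableSet.iUnion fun q => (hG2 q n).1, fun x => ?_⟩
      have heq : {t : ℝ | x + t • ξ n ∈ ⋃ q : ℚ, G q n}
          = ⋃ q : ℚ, {t : ℝ | x + t • ξ n ∈ G q n} := by
        ext t; simp [mem_iUnion]
      rw [heq]
      exact measure_iUnion_null fun q => (hG2 q n).2 x
  · rintro x ⟨hx1, hx2⟩
    by_contra hxN
    apply hx2
    apply continuousAt_of_avoid_frontiers f hq hd m hx1
    intro q hq' hfr
    exact hxN (mem_iUnion.2 ⟨q, by rw [hFrsub q hq']; exact hfr⟩)
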